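/- Every well-founded lattice has the weak minimal join-cover refinement property: for every element a (nonzero if the lattice has a least element), every nontrivial join-cover of a can be refined to a minimal nontrivial join-cover of a. -/

import Mathlib

section
variable {L : Type*} [Lattice L]

/-- `X` is a join-cover of `a`: a nonempty finite set of non-least elements whose join
is above `a`. -/
def IsJoinCover (a : L) (X : Finset L) : Prop :=
  (∀ x ∈ X, ¬ IsBot x) ∧ ∃ h : X.Nonempty, a ≤ X.sup' h id

/-- A join-cover is nontrivial if `a` lies below no member of it. -/
def IsNontrivialJoinCover (a : L) (X : Finset L) : Prop :=
  IsJoinCover a X ∧ ∀ x ∈ X, ¬ a ≤ x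

/-- `X` refines `Y`. -/
def Refines (X Y : Finset L) : Prop := ∀ x ∈ X, ∃ y ∈ Y, x ≤ y

/-- `X` is a minimal nontrivial join-cover of `a`: every nontrivial join-cover of `a`
refining `X` contains `X`. -/
def IsMinimalNontrivialJoinCover (a : L) (X : Finset L) : Prop :=
  IsNontrivialJoinCover a X ∧
    ∀ Y : Finset L, IsNontrivialJoinCover a Y → Refines Y X → X ⊆ Y

end

open Relation Multiset in
private lemma aux_reflTransGen_cutExpand {α : Type*} {r : α → α → Prop} :
    ∀ (t s u : Multiset α), (∀ x ∈ s, ∃ y ∈ t, r x y) →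
      Relation.ReflTransGen (Relation.CutExpand r) (u + s) (u + t) := by
  intro t
  induction t using Multiset.induction with
  | empty =>
    intro s u h
    obtain rfl : s = 0 := by
      rw [Multiset.eq_zero_iff_forall_notMem]
      intro x hx
      obtain ⟨y, hy, -⟩ := h x hx
      exact absurd hy (Multiset.notMem_zero y)
    rfl
  | cons a t' ih =>
    intro s u h
    classical
    set s₁ := s.filter (fun x => ∃ y ∈ t', r x y) with hs₁
    set s₂ := s.filter (fun x => ¬ ∃ y ∈ t', r x y) with hs₂
    have hs : s₁ + s₂ = s := Multiset.filter_add_not _ s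
    have h2 : ∀ x ∈ s₂, r x a := by
      intro x hx
      rw [hs₂, Multiset.mem_filter] at hx
      obtain ⟨y, hy, hr⟩ := h x hx.1
      rcases Multiset.mem_cons.1 hy with rfl | hy'
      · exact hr
      · exact absurd ⟨y, hy', hr⟩ hx.2
    have h1 : ∀ x ∈ s₁, ∃ y ∈ t', r x y := by
      intro x hx
      rw [hs₁, Multiset.mem_filter] at hx
      exact hx.2
    have step : Relation.CutExpand r (u + s₂ + t') (u + (a ::ₘ t')) := by
      refine ⟨s₂, a, h2, ?_⟩
      rw [← Multiset.singleton_add]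
      simp only [add_comm, add_left_comm, add_assoc]
    have ih' := ih s₁ (u + s₂) h1
    have e1 : u + s = u + s₂ + s₁ := by
      rw [← hs]; simp only [add_comm, add_left_comm, add_assoc]
    rw [e1]
    exact ih'.tail step

open Relation Multiset in
private lemma aux_transGen_cutExpand {α : Type*} {r : α → α → Prop} {s t : Multiset α}
    (u : Multiset α) (ht : t ≠ 0) (h : ∀ x ∈ s, ∃ y ∈ t, r x y) :
    Relation.TransGen (Relation.CutExpand r) (u + s) (u + t) := by
  classical
  obtain ⟨a, ha⟩ := Multiset.exists_mem_of_ne_zero ht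
  obtain ⟨t', rfl⟩ := Multiset.exists_cons_of_mem ha
  set s₁ := s.filter (fun x => ∃ y ∈ t', r x y) with hs₁
  set s₂ := s.filter (fun x => ¬ ∃ y ∈ t', r x y) with hs₂
  have hs : s₁ + s₂ = s := Multiset.filter_add_not _ s
  have h2 : ∀ x ∈ s₂, r x a := by
    intro x hx
    rw [hs₂, Multiset.mem_filter] at hx
    obtain ⟨y, hy, hr⟩ := h x hx.1
    rcases Multiset.mem_cons.1 hy with rfl | hy'
    · exact hr
    · exact absurd ⟨y, hy', hr⟩ hx.2
  have h1 : ∀ x ∈ s₁, ∃ y ∈ t', r x y := by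
    intro x hx
    rw [hs₁, Multiset.mem_filter] at hx
    exact hx.2
  have step : Relation.CutExpand r (u + s₂ + t') (u + (a ::ₘ t')) := by
    refine ⟨s₂, a, h2, ?_⟩
    rw [← Multiset.singleton_add]
    simp only [add_comm, add_left_comm, add_assoc]
  have rtg := aux_reflTransGen_cutExpand t' s₁ (u + s₂) h1
  have e1 : u + s = u + s₂ + s₁ := by
    rw [← hs]; simp only [add_comm, add_left_comm, add_assoc]
  rw [e1]
  exact Relation.TransGen.tail' rtg step

/-- Every well-founded lattice has the weak minimal join-cover refinement property. -/
theorem wellFounded_implies_weak_minimal_joinCover_refinement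
    {L : Type*} [Lattice L] (hwf : WellFoundedLT L)
    (a : L) (ha : ¬ IsBot a) (X : Finset L) (hX : IsNontrivialJoinCover a X) :
    ∃ Y : Finset L, IsMinimalNontrivialJoinCover a Y ∧ Refines Y X := by
  classical
  have wflt : WellFounded ((· < ·) : L → L → Prop) := hwf.wf
  have wfc : WellFounded
      (InvImage (Relation.TransGen (Relation.CutExpand ((· < ·) : L → L → Prop)))
        (fun Y : Finset L => Y.val)) :=
    InvImage.wf _ wflt.cutExpand.transGen
  have key : ∀ Y : Finset L, IsNontrivialJoinCover a Y → Refines Y X →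
      ∃ Z : Finset L, IsMinimalNontrivialJoinCover a Z ∧ Refines Z X := by
    intro Y
    induction Y using wfc.induction with
    | _ Y IH =>
    intro hY hYX
    by_cases hmin : ∀ W : Finset L, IsNontrivialJoinCover a W → Refines W Y → Y ⊆ W
    · exact ⟨Y, ⟨hY, hmin⟩, hYX⟩
    · push_neg at hmin
      obtain ⟨W, hW, hWY, hYW⟩ := hmin
      set Z : Finset L := W.filter (fun z => ¬ ∃ y ∈ W ∩ Y, z < y) with hZdef
      have hZW : Z ⊆ W := Finset.filter_subset _ _
      have hdom : ∀ w ∈ W, ∃ z ∈ Z, w ≤ z := by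
        intro w hw
        obtain ⟨z, hzT, hzmax⟩ :=
          (W.filter (fun y => w ≤ y)).exists_maximal ⟨w, Finset.mem_filter.2 ⟨hw, le_rfl⟩⟩
        rw [Finset.mem_filter] at hzT
        refine ⟨z, ?_, hzT.2⟩
        rw [hZdef, Finset.mem_filter]
        refine ⟨hzT.1, ?_⟩
        rintro ⟨y, hy, hzy⟩
        exact absurd (hzmax
          (Finset.mem_filter.2 ⟨(Finset.mem_inter.1 hy).1, hzT.2.trans hzy.le⟩) hzy.le)
          (not_le_of_gt hzy)
      obtain ⟨⟨hWbot, hWne, hWsup⟩, hWnt⟩ := hW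
      obtain ⟨w0, hw0⟩ := hWne
      obtain ⟨z0, hz0, -⟩ := hdom w0 hw0
      have hZne : Z.Nonempty := ⟨z0, hz0⟩
      have hZcov : IsNontrivialJoinCover a Z := by
        refine ⟨⟨fun x hx => hWbot x (hZW hx), hZne, le_trans hWsup ?_⟩,
          fun x hx => hWnt x (hZW hx)⟩
        refine Finset.sup'_le _ _ fun w hw => ?_
        obtain ⟨z, hz, hwz⟩ := hdom w hw
        exact le_trans hwz (Finset.le_sup' (f := id) hz)
      have hZX : Refines Z X := by
        intro z hz
        obtain ⟨y, hy, hzy⟩ := hWY z (hZW hz)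
        obtain ⟨x, hx, hyx⟩ := hYX y hy
        exact ⟨x, hx, hzy.trans hyx⟩
      -- strict decrease in the multiset order
      set u : Multiset L := Z.val.filter (· ∈ Y) with hu
      set s : Multiset L := Z.val.filter (fun z => ¬ z ∈ Y) with hs
      set t : Multiset L := Y.val.filter (fun y => ¬ y ∈ Z) with htdef
      have hZval : Z.val = u + s := (Multiset.filter_add_not _ _).symm
      have hYval : Y.val = u + t := by
        have h1 : Y.val.filter (· ∈ Z) + t = Y.val := Multiset.filter_add_not _ _
        have h2 : Y.val.filter (· ∈ Z) = u := by
          rw [Multiset.Nodup.ext (Multiset.Nodup.filter _ Y.nodup)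
            (Multiset.Nodup.filter _ Z.nodup)]
          intro x
          simp only [Multiset.mem_filter, Finset.mem_val]
          tauto
        rw [← h1, h2]
      have ht0 : t ≠ 0 := by
        obtain ⟨y0, hy0Y, hy0W⟩ := Finset.not_subset.1 hYW
        have : y0 ∈ t := Multiset.mem_filter.2 ⟨hy0Y, fun h => hy0W (hZW h)⟩
        intro h; rw [h] at this; exact Multiset.notMem_zero _ this
      have hst : ∀ x ∈ s, ∃ y ∈ t, x < y := by
        intro x hx
        rw [hs, Multiset.mem_filter] at hx
        obtain ⟨hxZ, hxY⟩ := hx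
        rw [Finset.mem_val] at hxZ
        obtain ⟨y, hy, hxy⟩ := hWY x (hZW hxZ)
        have hxlt : x < y := lt_of_le_of_ne hxy (by rintro rfl; exact hxY hy)
        have hyZ : y ∉ Z := by
          intro hyZ
          have hxZ' := Finset.mem_filter.1 (hZdef ▸ hxZ)
          exact hxZ'.2 ⟨y, Finset.mem_inter.2 ⟨hZW hyZ, hy⟩, hxlt⟩
        exact ⟨y, Multiset.mem_filter.2 ⟨hy, hyZ⟩, hxlt⟩
      have hdec : Relation.TransGen (Relation.CutExpand ((· < ·) : L → L → Prop))
          Z.val Y.val := by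
        rw [hZval, hYval]
        exact aux_transGen_cutExpand u ht0 hst
      exact IH Z hdec hZcov hZX
  exact key X hX fun x hx => ⟨x, hx, le_rfl⟩
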